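/- arXiv:2109.10391 — 11 statements merged into one kernel-verified Lean document; each statement's English description precedes it below -/
import Mathlib

section
/- Consider the quasi-radially symmetric map T(x,y) = (f(|x|) x/|x| + g(x) β - y, x) on ℝᴺ × ℝᴺ, where f is a scalar function, g : ℝᴺ → ℝ, and β ∈ ℝᴺ is a fixed vector. Then for any indices i < j < k, the function K_{i,j,k}(x,y) = β_i L_{j,k}(x,y) + β_j L_{k,i}(x,y) + β_k L_{i,j}(x,y), where L_{a,b}(x,y) = x_a y_b - y_a x_b, is an invariant of T. -/
/-- For a quasi-radially symmetric system, the functions `K_{i,j,k}` are invariants. -/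
theorem quasi_radial_K_invariant (N : ℕ) (f : ℝ → ℝ) (g : (Fin N → ℝ) → ℝ)
    (β : Fin N → ℝ) (i j k : Fin N) (hij : i < j) (hjk : j < k)
    (x y : Fin N → ℝ) (hx : x ≠ 0) :
    let T : (Fin N → ℝ) × (Fin N → ℝ) → (Fin N → ℝ) × (Fin N → ℝ) :=
      fun p => ((fun l => f (Real.sqrt (∑ m, p.1 m ^ 2)) * p.1 l /
          Real.sqrt (∑ m, p.1 m ^ 2) + g p.1 * β l - p.2 l), p.1)
    let L : Fin N → Fin N → (Fin N → ℝ) × (Fin N → ℝ) → ℝ :=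
      fun a b p => p.1 a * p.2 b - p.2 a * p.1 b
    let K : (Fin N → ℝ) × (Fin N → ℝ) → ℝ :=
      fun p => β i * L j k p + β j * L k i p + β k * L i j p
    K (T (x, y)) = K (x, y) := by
  intro T L K
  simp only [T, L, K]
  ring
end

section
/- Define the map on (J₊, J₋, J₃) ∈ ℝ³ by J₊' = α²J₊ - 2αJ₃ + J₋, J₋' = J₊, J₃' = -J₃ + αJ₊. Then both the Casimir C = J₊J₋ - J₃² and the function H = J₊ - αJ₃ + J₋ are invariants of this map. -/
/-- The Casimir `C = J₊J₋ - J₃²` and `H = J₊ - αJ₃ + J₋` are invariants of the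
sl₂ dynamical system of the linear radially symmetric equation. -/
theorem sl2_linear_invariants (α Jp Jm J3 : ℝ) :
    let Jp' : ℝ := α ^ 2 * Jp - 2 * α * J3 + Jm
    let Jm' : ℝ := Jp
    let J3' : ℝ := -J3 + α * Jp
    Jp' * Jm' - J3' ^ 2 = Jp * Jm - J3 ^ 2 ∧
    Jp' - α * J3' + Jm' = Jp - α * J3 + Jm := by
  constructor <;> ring
end

section
/- Define the map on (J₊, J₋, J₃) ∈ ℝ³ by J₊' = α²J₊ - 2αJ₃ + J₋, J₋' = J₊, J₃' = -J₃ + αJ₊. This map preserves the sl₂(ℝ) Lie–Poisson bracket determined by {J₊, J₋} = 4J₃, {J₊, J₃} = 2J₊, {J₋, J₃} = -2J₋; that is, the same bracket relations hold for the images J₊', J₋', J₃' computed via the Poisson bivector in the original variables. -/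
/-- Partial derivative of a function on ℝ³ in the `i`-th coordinate direction. -/
noncomputable def pd3 (f : (Fin 3 → ℝ) → ℝ) (i : Fin 3) (z : Fin 3 → ℝ) : ℝ :=
  fderiv ℝ f z (Pi.single i 1)

/-- The sl₂(ℝ) Lie–Poisson structure matrix in coordinates `(J₊, J₋, J₃)`,
determined by `{J₊,J₋} = 4J₃`, `{J₊,J₃} = 2J₊`, `{J₋,J₃} = -2J₋`. -/
noncomputable def sl2Mat (z : Fin 3 → ℝ) : Fin 3 → Fin 3 → ℝ :=
  ![![0, 4 * z 2, 2 * z 0], ![-(4 * z 2), 0, -(2 * z 1)], ![-(2 * z 0), 2 * z 1, 0]]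

/-- The Lie–Poisson bracket on ℝ³ associated to `sl2Mat`. -/
noncomputable def sl2Br (f g : (Fin 3 → ℝ) → ℝ) (z : Fin 3 → ℝ) : ℝ :=
  ∑ i, ∑ j, sl2Mat z i j * pd3 f i z * pd3 g j z

lemma pd_lin (a b c : ℝ) (i : Fin 3) (z : Fin 3 → ℝ) :
    pd3 (fun w => a * w 0 + b * w 1 + c * w 2) i z = ![a, b, c] i := by
  have h : HasFDerivAt (fun w : Fin 3 → ℝ => a * w 0 + b * w 1 + c * w 2)
      (a • (ContinuousLinearMap.proj 0 : (Fin 3 → ℝ) →L[ℝ] ℝ)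
        + b • ContinuousLinearMap.proj 1 + c • ContinuousLinearMap.proj 2) z := by
    exact (((hasFDerivAt_apply 0 z).const_smul a).add
      ((hasFDerivAt_apply 1 z).const_smul b)).add ((hasFDerivAt_apply 2 z).const_smul c)
  rw [pd3, h.fderiv]
  fin_cases i <;> simp [ContinuousLinearMap.proj_apply]

/-- The sl₂ dynamical system of the linear radially symmetric equation preserves
the sl₂(ℝ) Lie–Poisson bracket: the bracket relations hold for the images of the
coordinate functions. -/
theorem sl2_linear_poisson_preserved (α : ℝ) :
    let T : (Fin 3 → ℝ) → (Fin 3 → ℝ) :=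
      fun z => ![α ^ 2 * z 0 - 2 * α * z 2 + z 1, z 0, -z 2 + α * z 0]
    (∀ z, sl2Br (fun w => T w 0) (fun w => T w 1) z = 4 * T z 2) ∧
    (∀ z, sl2Br (fun w => T w 0) (fun w => T w 2) z = 2 * T z 0) ∧
    (∀ z, sl2Br (fun w => T w 1) (fun w => T w 2) z = -(2 * T z 1)) := by
  intro T
  have h0 : (fun w => T w 0) = fun w : Fin 3 → ℝ => α ^ 2 * w 0 + 1 * w 1 + (-(2 * α)) * w 2 := by
    funext w; show α ^ 2 * w 0 - 2 * α * w 2 + w 1 = _; ring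
  have h1 : (fun w => T w 1) = fun w : Fin 3 → ℝ => 1 * w 0 + 0 * w 1 + 0 * w 2 := by
    funext w; show w 0 = _; ring
  have h2 : (fun w => T w 2) = fun w : Fin 3 → ℝ => α * w 0 + 0 * w 1 + (-1) * w 2 := by
    funext w; show -w 2 + α * w 0 = _; ring
  refine ⟨fun z => ?_, fun z => ?_, fun z => ?_⟩ <;>
    simp only [sl2Br, h0, h1, h2, pd_lin, Fin.sum_univ_three, sl2Mat] <;>
    simp only [T, Matrix.cons_val_zero, Matrix.cons_val_one, Matrix.head_cons,
      Matrix.cons_val_two, Matrix.tail_cons] <;> ring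
end

section
/- Define the map on (J₊, J₋, J₃) by J₊' = α(α - 2J₃)/J₊ + 2J₃ - 2α + J₋ + J₊, J₋' = J₊, J₃' = α - J₃ - J₊ (valid for J₊ ≠ 0). Then the Casimir C = J₊J₋ - J₃² and the function H = (J₊ + J₋ + 2J₃)(J₊J₋ + α²) - 2α[2J₊J₋ + (J₊ + J₋)J₃] are both invariants of this map. -/
/-- The Casimir and the invariant `H` of the sl₂ dynamical system associated with the
radially symmetric autonomous discrete Painlevé I system. -/
theorem sl2_dPI_invariants (α Jp Jm J3 : ℝ) (hJp : Jp ≠ 0) :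
    let Jp' : ℝ := α * (α - 2 * J3) / Jp + 2 * J3 - 2 * α + Jm + Jp
    let Jm' : ℝ := Jp
    let J3' : ℝ := α - J3 - Jp
    Jp' * Jm' - J3' ^ 2 = Jp * Jm - J3 ^ 2 ∧
    (Jp' + Jm' + 2 * J3') * (Jp' * Jm' + α ^ 2)
        - 2 * α * (2 * Jp' * Jm' + (Jp' + Jm') * J3')
      = (Jp + Jm + 2 * J3) * (Jp * Jm + α ^ 2)
        - 2 * α * (2 * Jp * Jm + (Jp + Jm) * J3) := by
  intro Jp' Jm' J3'
  constructor <;> (simp only [Jp', Jm', J3']; field_simp; ring)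
end

section
/- Define the map on (J₊, J₋, J₃) by J₊' = J₋ - 2αJ₃/(1 - J₊) + α²J₊/(1 - J₊)², J₋' = J₊, J₃' = -J₃ + αJ₊/(1 - J₊) (valid for J₊ ≠ 1). Then the Casimir C = J₊J₋ - J₃² and the function M = J₊ + J₋ - J₃(α + J₃) are both invariants of this map. -/
/-- The Casimir and the invariant `M` of the sl₂ dynamical system associated with the
radially symmetric vector McMillan map. -/
theorem sl2_mcmillan_invariants (α Jp Jm J3 : ℝ) (hJp : Jp ≠ 1) :
    let Jp' : ℝ := Jm - 2 * α * J3 / (1 - Jp) + α ^ 2 * Jp / (1 - Jp) ^ 2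
    let Jm' : ℝ := Jp
    let J3' : ℝ := -J3 + α * Jp / (1 - Jp)
    Jp' * Jm' - J3' ^ 2 = Jp * Jm - J3 ^ 2 ∧
    Jp' + Jm' - J3' * (α + J3') = Jp + Jm - J3 * (α + J3) := by
  have h : 1 - Jp ≠ 0 := by intro h; apply hJp; linarith
  constructor <;> field_simp <;> ring
end

section
/- Consider the vector McMillan map T(x,y) = (αx/(1 - |x|²) - y, x) on ℝᴺ × ℝᴺ (defined for |x| ≠ 1). Then the function M(x,y) = |x|² + |y|² - (x·y)(α + x·y) is an invariant of T. -/
/-- `M(x,y) = |x|² + |y|² - (x·y)(α + x·y)` is an invariant of the vector McMillan map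
`T(x,y) = (αx/(1-|x|²) - y, x)`. -/
theorem vector_mcmillan_invariant (N : ℕ) (α : ℝ) (x y : Fin N → ℝ)
    (hx : (∑ i, x i ^ 2) ≠ 1) :
    let T : (Fin N → ℝ) × (Fin N → ℝ) → (Fin N → ℝ) × (Fin N → ℝ) :=
      fun p => ((fun l => α * p.1 l / (1 - ∑ i, p.1 i ^ 2) - p.2 l), p.1)
    let M : (Fin N → ℝ) × (Fin N → ℝ) → ℝ := fun p =>
      (∑ i, p.1 i ^ 2) + (∑ i, p.2 i ^ 2)
        - (∑ i, p.1 i * p.2 i) * (α + ∑ i, p.1 i * p.2 i)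
    M (T (x, y)) = M (x, y) := by
  intro T M
  simp only [T, M]
  set s := ∑ i, x i ^ 2 with hs_def
  have hs : (1 : ℝ) - s ≠ 0 := sub_ne_zero.mpr (Ne.symm hx)
  have h1 : ∀ i, (α * x i / (1 - s) - y i) ^ 2
      = α ^ 2 / (1 - s) ^ 2 * x i ^ 2 - 2 * α / (1 - s) * (x i * y i) + y i ^ 2 := by
    intro i; field_simp; ring
  have h2 : ∀ i, (α * x i / (1 - s) - y i) * x i
      = α / (1 - s) * x i ^ 2 - x i * y i := by
    intro i; field_simp
  rw [Finset.sum_congr rfl fun i _ => h1 i, Finset.sum_congr rfl fun i _ => h2 i]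
  rw [Finset.sum_add_distrib, Finset.sum_sub_distrib, Finset.sum_sub_distrib,
    ← Finset.mul_sum, ← Finset.mul_sum, ← Finset.mul_sum]
  rw [← hs_def]
  have key : ∀ q r : ℝ,
      α ^ 2 / (1 - s) ^ 2 * s - 2 * α / (1 - s) * q + r + s
        - (α / (1 - s) * s - q) * (α + (α / (1 - s) * s - q))
      = s + r - q * (α + q) := by
    intro q r
    field_simp
    ring
  exact key (∑ i, x i * y i) (∑ i, y i ^ 2)
end

section
/- Consider the quasi-radial linear map T(x,y) = ((1 + α₁ β·x)β - α₀ x - y, x) on ℝᴺ × ℝᴺ, where α₀, α₁ ∈ ℝ and β ∈ ℝᴺ. Then H₂(x,y) = α₀[(β·y)(β·x) - (x·y)|β|²] + (β·y)² + (β·x)² - (|y|² + |x|²)|β|² is an invariant of T. -/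
private lemma sum_lin {N : ℕ} (c d : ℝ) (f u v w : Fin N → ℝ) :
    ∑ i, f i * (c * u i - d * v i - w i)
      = c * ∑ i, f i * u i - d * ∑ i, f i * v i - ∑ i, f i * w i := by
  rw [Finset.mul_sum, Finset.mul_sum, ← Finset.sum_sub_distrib, ← Finset.sum_sub_distrib]
  exact Finset.sum_congr rfl fun i _ => by ring

private lemma sum_sq {N : ℕ} (c d : ℝ) (u v w : Fin N → ℝ) :
    ∑ i, (c * u i - d * v i - w i) ^ 2
      = c ^ 2 * ∑ i, u i ^ 2 + d ^ 2 * ∑ i, v i ^ 2 + ∑ i, w i ^ 2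
        - 2 * c * d * ∑ i, u i * v i - 2 * c * ∑ i, u i * w i
        + 2 * d * ∑ i, v i * w i := by
  simp only [Finset.mul_sum]
  rw [← Finset.sum_add_distrib, ← Finset.sum_add_distrib, ← Finset.sum_sub_distrib,
    ← Finset.sum_sub_distrib, ← Finset.sum_add_distrib]
  exact Finset.sum_congr rfl fun i _ => by ring

/-- `H₂` is an invariant of the quasi-radial linear map
`T(x,y) = ((1 + α₁ β·x)β - α₀x - y, x)`. -/
theorem quasi_radial_linear_H2_invariant (N : ℕ) (α₀ α₁ : ℝ) (β x y : Fin N → ℝ) :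
    let T : (Fin N → ℝ) × (Fin N → ℝ) → (Fin N → ℝ) × (Fin N → ℝ) :=
      fun p => ((fun l => (1 + α₁ * ∑ i, β i * p.1 i) * β l - α₀ * p.1 l - p.2 l), p.1)
    let H₂ : (Fin N → ℝ) × (Fin N → ℝ) → ℝ := fun p =>
      α₀ * ((∑ i, β i * p.2 i) * (∑ i, β i * p.1 i)
            - (∑ i, p.1 i * p.2 i) * (∑ i, β i ^ 2))
        + (∑ i, β i * p.2 i) ^ 2 + (∑ i, β i * p.1 i) ^ 2
        - ((∑ i, p.2 i ^ 2) + (∑ i, p.1 i ^ 2)) * (∑ i, β i ^ 2)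
    H₂ (T (x, y)) = H₂ (x, y) := by
  intro T H₂
  simp only [T, H₂]
  have h1 := sum_lin (1 + α₁ * ∑ i, β i * x i) α₀ β β x y
  have h2 := sum_lin (1 + α₁ * ∑ i, β i * x i) α₀ x β x y
  have h3 := sum_sq (1 + α₁ * ∑ i, β i * x i) α₀ β x y
  simp only [pow_two] at *
  rw [show (∑ i, x i * β i) = ∑ i, β i * x i from
    Finset.sum_congr rfl fun i _ => mul_comm _ _] at h2
  rw [show (∑ i, ((1 + α₁ * ∑ j, β j * x j) * β i - α₀ * x i - y i) * x i)
      = ∑ i, x i * ((1 + α₁ * ∑ j, β j * x j) * β i - α₀ * x i - y i) from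
    Finset.sum_congr rfl fun i _ => mul_comm _ _, h1, h2, h3]
  ring
end

section
/- Consider the nonlinear quasi-radial map T(x,y) = ([1 + α₁(β·x) + ε(β·x)²]β - α₀x - y, x) on ℝᴺ × ℝᴺ, where α₀, α₁, ε ∈ ℝ and β ∈ ℝᴺ. Then for any indices i < j < k, K_{i,j,k}(x,y) = β_i(x_j y_k - x_k y_j) + β_j(x_k y_i - x_i y_k) + β_k(x_i y_j - x_j y_i) is an invariant of T. -/
/-- The functions `K_{i,j,k}` are invariants of the nonlinear quasi-radial map
`T(x,y) = ([1 + α₁(β·x) + ε(β·x)²]β - α₀x - y, x)`. -/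
theorem nonlinear_quasi_radial_K_invariant (N : ℕ) (α₀ α₁ ε : ℝ) (β : Fin N → ℝ)
    (i j k : Fin N) (hij : i < j) (hjk : j < k) (x y : Fin N → ℝ) :
    let T : (Fin N → ℝ) × (Fin N → ℝ) → (Fin N → ℝ) × (Fin N → ℝ) :=
      fun p => ((fun l => (1 + α₁ * (∑ m, β m * p.1 m)
          + ε * (∑ m, β m * p.1 m) ^ 2) * β l - α₀ * p.1 l - p.2 l), p.1)
    let K : (Fin N → ℝ) × (Fin N → ℝ) → ℝ := fun p =>
      β i * (p.1 j * p.2 k - p.1 k * p.2 j)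
        + β j * (p.1 k * p.2 i - p.1 i * p.2 k)
        + β k * (p.1 i * p.2 j - p.1 j * p.2 i)
    K (T (x, y)) = K (x, y) := by
  intro T K; simp only [T, K]; ring
end

section
/- Consider the map on ℝ³ (coordinates J₊, J₋, J₃) given by J₊' = f(√J₊)² - 2J₃ f(√J₊)/√J₊ + J₋, J₋' = J₊, J₃' = -J₃ + √J₊ f(√J₊), where f is any scalar function (assume J₊ > 0). Then the Casimir C = J₊J₋ - J₃² is an invariant of this map for every choice of f. -/
/-- The sl₂ Casimir `C = J₊J₋ - J₃²` is an invariant of the dynamical system induced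
on the sl₂ generators by an arbitrary radially symmetric standard-form system,
for every choice of `f`. -/
theorem sl2_general_radial_casimir (f : ℝ → ℝ) (Jp Jm J3 : ℝ) (hJp : 0 < Jp) :
    let Jp' : ℝ := f (Real.sqrt Jp) ^ 2
      - 2 * J3 * f (Real.sqrt Jp) / Real.sqrt Jp + Jm
    let Jm' : ℝ := Jp
    let J3' : ℝ := -J3 + Real.sqrt Jp * f (Real.sqrt Jp)
    Jp' * Jm' - J3' ^ 2 = Jp * Jm - J3 ^ 2 := by
  have hs : Real.sqrt Jp ≠ 0 := ne_of_gt (Real.sqrt_pos.mpr hJp)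
  have hsq : Real.sqrt Jp ^ 2 = Jp := Real.sq_sqrt hJp.le
  simp only
  field_simp
  linear_combination (2 * J3 * f (Real.sqrt Jp) - f (Real.sqrt Jp) ^ 2 * Real.sqrt Jp) * hsq
end

section
/- Let f : (0,∞) → ℝ be any function and consider the radially symmetric map T(x,y) = (f(|x|)x/|x| - y, x) on (ℝᴺ \ {0}) × ℝᴺ. Then under T, the sl₂ realisation (J₊, J₋, J₃) = (|x|², |y|², x·y) transforms as J₊ ↦ f(√J₊)² - 2J₃ f(√J₊)/√J₊ + J₋, J₋ ↦ J₊, J₃ ↦ -J₃ + √J₊ f(√J₊); in particular the induced evolution on (J₊, J₋, J₃) is closed, depending only on (J₊, J₋, J₃). -/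
/-- For any radially symmetric map `T(x,y) = (f(|x|)x/|x| - y, x)`, the evolution of the
sl₂ realisation `(J₊, J₋, J₃) = (|x|², |y|², x·y)` is closed, with explicit formulas. -/
theorem sl2_radial_closure (N : ℕ) (f : ℝ → ℝ) (x y : Fin N → ℝ) (hx : x ≠ 0) :
    let T : (Fin N → ℝ) × (Fin N → ℝ) → (Fin N → ℝ) × (Fin N → ℝ) :=
      fun p => ((fun l => f (Real.sqrt (∑ m, p.1 m ^ 2)) * p.1 l /
          Real.sqrt (∑ m, p.1 m ^ 2) - p.2 l), p.1)
    let Jp : (Fin N → ℝ) × (Fin N → ℝ) → ℝ := fun p => ∑ i, p.1 i ^ 2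
    let Jm : (Fin N → ℝ) × (Fin N → ℝ) → ℝ := fun p => ∑ i, p.2 i ^ 2
    let J3 : (Fin N → ℝ) × (Fin N → ℝ) → ℝ := fun p => ∑ i, p.1 i * p.2 i
    Jp (T (x, y)) = f (Real.sqrt (Jp (x, y))) ^ 2
        - 2 * J3 (x, y) * f (Real.sqrt (Jp (x, y))) / Real.sqrt (Jp (x, y))
        + Jm (x, y) ∧
    Jm (T (x, y)) = Jp (x, y) ∧
    J3 (T (x, y)) = -J3 (x, y) + Real.sqrt (Jp (x, y)) * f (Real.sqrt (Jp (x, y))) := by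
  intro T Jp Jm J3
  have hS : 0 < ∑ m, x m ^ 2 := by
    have : ∃ i, x i ≠ 0 := by
      by_contra h
      push_neg at h
      exact hx (funext h)
    obtain ⟨i, hi⟩ := this
    exact Finset.sum_pos' (fun j _ => sq_nonneg _) ⟨i, Finset.mem_univ i, by positivity⟩
  set r := Real.sqrt (∑ m, x m ^ 2) with hr
  have hr0 : 0 < r := Real.sqrt_pos.mpr hS
  have hrne : r ≠ 0 := ne_of_gt hr0
  have hrsq : r ^ 2 = ∑ m, x m ^ 2 := Real.sq_sqrt hS.le
  set c := f r with hc
  refine ⟨?_, ?_, ?_⟩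
  · show (∑ i, (c * x i / r - y i) ^ 2) = c ^ 2 - 2 * (∑ i, x i * y i) * c / r + ∑ i, y i ^ 2
    have : ∀ i, (c * x i / r - y i) ^ 2
        = (c / r) ^ 2 * x i ^ 2 - 2 * (c / r) * (x i * y i) + y i ^ 2 := by
      intro i; field_simp; ring
    rw [Finset.sum_congr rfl fun i _ => this i]
    rw [Finset.sum_add_distrib, Finset.sum_sub_distrib, ← Finset.mul_sum, ← Finset.mul_sum,
      ← hrsq]
    field_simp
  · rfl
  · show (∑ i, (c * x i / r - y i) * x i) = -(∑ i, x i * y i) + r * c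
    have : ∀ i, (c * x i / r - y i) * x i = (c / r) * x i ^ 2 - x i * y i := by
      intro i; field_simp
    rw [Finset.sum_congr rfl fun i _ => this i, Finset.sum_sub_distrib, ← Finset.mul_sum,
      ← hrsq]
    field_simp
    ring
end

section
/- Consider the map T(x,y) = (α x/|x|² + β - x - y, x) on (ℝᴺ \ {0}) × ℝᴺ, with α ∈ ℝ, β ∈ ℝᴺ (the vector autonomous discrete Painlevé I system x_{n+1} + x_n + x_{n-1} = αx_n/|x_n|² + β). Then for indices i < j < k, K_{i,j,k}(x,y) = β_i(x_j y_k - x_k y_j) + β_j(x_k y_i - x_i y_k) + β_k(x_i y_j - x_j y_i) is an invariant of T. -/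
/-- The functions `K_{i,j,k}` are invariants of the vector autonomous discrete
Painlevé I map `T(x,y) = (αx/|x|² + β - x - y, x)`. -/
theorem vector_dPI_K_invariant (N : ℕ) (α : ℝ) (β : Fin N → ℝ)
    (i j k : Fin N) (hij : i < j) (hjk : j < k) (x y : Fin N → ℝ) (hx : x ≠ 0) :
    let T : (Fin N → ℝ) × (Fin N → ℝ) → (Fin N → ℝ) × (Fin N → ℝ) :=
      fun p => ((fun l => α * p.1 l / (∑ m, p.1 m ^ 2) + β l - p.1 l - p.2 l), p.1)
    let K : (Fin N → ℝ) × (Fin N → ℝ) → ℝ := fun p =>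
      β i * (p.1 j * p.2 k - p.1 k * p.2 j)
        + β j * (p.1 k * p.2 i - p.1 i * p.2 k)
        + β k * (p.1 i * p.2 j - p.1 j * p.2 i)
    K (T (x, y)) = K (x, y) := by
  intro T K
  simp only [T, K]
  ring
end
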